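/- Let n ≥ 2 be an integer. There is a constant C = C(n) > 0 such that for every r > 0, all x, y, z ∈ ℝ^n with |x−y| ≤ r, x ≠ z, and y ≠ z, one has | |x−z|^{-(n-1)} 𝟙_{{|z−x| ≥ r}}(z) − |y−z|^{-(n-1)} 𝟙_{{|z−y| ≥ r}}(z) − (n−1) (y−x) · (x−z) |x−z|^{-(n+1)} 𝟙_{{|z−x| ≥ r}}(z) | ≤ C r^2 / (|x−z|^{n+1} + r^{n+1}). -/

import Mathlib

open MeasureTheory Metric
open scoped RealInnerProductSpace

open Set

lemma key_taylor (q d s t : ℝ) (hq : q < 0) (hd : 0 < d) (hs : 0 ≤ s)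
    (hsd : s ≤ d / 2) (ht : |t| ≤ s * d) :
    |(d^2) ^ q - (d^2 + 2*t + s^2) ^ q + q * (2*t) * (d^2) ^ (q-1)| ≤
      (2 * |q| * (4:ℝ)^(1-q) + 9 * |q| * |q-1| * (4:ℝ)^(2-q)) * (s^2 * (d^2) ^ (q-1)) := by
  set P : ℝ → ℝ := fun u => d^2 + 2*t*u + s^2*u^2 with hPdef
  have hd2 : (0:ℝ) < d^2 := by positivity
  have hPlow : ∀ u ∈ Icc (0:ℝ) 1, d^2/4 ≤ P u := by
    intro u hu
    obtain ⟨hu0, hu1⟩ := hu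
    have h1 : -(s*d) ≤ t := (abs_le.mp ht).1
    have h2 : s * u ≤ d / 2 := by nlinarith
    simp only [hPdef]
    nlinarith [sq_nonneg (d - s*u), mul_nonneg (mul_nonneg hs hu0) hd.le]
  have hPpos : ∀ u ∈ Icc (0:ℝ) 1, 0 < P u := fun u hu => lt_of_lt_of_le (by positivity) (hPlow u hu)
  have hP' : ∀ u : ℝ, HasDerivAt P (2*t + 2*s^2*u) u := by
    intro u
    have h := (((hasDerivAt_id u).const_mul (2*t)).const_add (d^2)).add
      ((hasDerivAt_pow 2 u).const_mul (s^2))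
    refine h.congr_deriv ?_
    push_cast; ring
  set g1 : ℝ → ℝ := fun u => (2*t + 2*s^2*u) * q * P u ^ (q-1) with hg1def
  have hg : ∀ u ∈ Icc (0:ℝ) 1, HasDerivAt (fun u => P u ^ q) (g1 u) u := by
    intro u hu
    exact (hP' u).rpow_const (Or.inl (hPpos u hu).ne')
  set g2 : ℝ → ℝ := fun u => 2*s^2 * q * P u ^ (q-1) +
      (2*t + 2*s^2*u) * q * ((2*t + 2*s^2*u) * (q-1) * P u ^ (q-2)) with hg2def
  have hg1' : ∀ u ∈ Icc (0:ℝ) 1, HasDerivAt g1 (g2 u) u := by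
    intro u hu
    have ha : HasDerivAt (fun u : ℝ => (2*t + 2*s^2*u) * q) (2*s^2 * q) u := by
      have h := (((hasDerivAt_id u).const_mul (2*s^2)).const_add (2*t)).mul_const q
      refine h.congr_deriv ?_
      ring
    have hb : HasDerivAt (fun u => P u ^ (q-1)) ((2*t + 2*s^2*u) * (q-1) * P u ^ (q-2)) u := by
      have h := (hP' u).rpow_const (p := q-1) (Or.inl (hPpos u hu).ne')
      convert h using 2
      congr 1
      ring
    exact ha.mul hb
  set K : ℝ := 2 * |q| * (4:ℝ)^(1-q) + 9 * |q| * |q-1| * (4:ℝ)^(2-q) with hKdef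
  set E1 : ℝ := (d^2) ^ (q-1) with hE1def
  set E2 : ℝ := (d^2) ^ (q-2) with hE2def
  have hE : d^2 * E2 = E1 := by
    rw [hE1def, hE2def, show q - 1 = 1 + (q-2) by ring, Real.rpow_add hd2, Real.rpow_one]
  have hE1nn : 0 ≤ E1 := Real.rpow_nonneg hd2.le _
  have hE2nn : 0 ≤ E2 := Real.rpow_nonneg hd2.le _
  have hinv : ∀ a : ℝ, ((d^2/4 : ℝ)) ^ a = (4:ℝ)^(-a) * (d^2) ^ a := by
    intro a
    rw [div_eq_mul_inv, Real.mul_rpow hd2.le (by norm_num), mul_comm]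
    congr 1
    rw [Real.inv_rpow (by norm_num : (0:ℝ) ≤ 4), ← Real.rpow_neg (by norm_num)]
  have habsA : ∀ u ∈ Icc (0:ℝ) 1, |2*t + 2*s^2*u| ≤ 3*(s*d) := by
    intro u hu
    obtain ⟨hu0, hu1⟩ := hu
    have h2 : s^2 * u ≤ s * (d/2) := by nlinarith
    have h3 := abs_le.mp ht
    rw [abs_le]
    constructor <;> nlinarith
  have hg2bound : ∀ u ∈ Icc (0:ℝ) 1, |g2 u| ≤ K * (s^2 * E1) := by
    intro u hu
    have hPu := hPpos u hu
    have hPl := hPlow u hu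
    have hq4 : (0:ℝ) < d^2/4 := by positivity
    have hb1 : P u ^ (q-1) ≤ (4:ℝ)^(1-q) * E1 := by
      have := Real.rpow_le_rpow_of_nonpos hq4 hPl (by linarith : q - 1 ≤ 0)
      rwa [hinv, neg_sub] at this
    have hb2 : P u ^ (q-2) ≤ (4:ℝ)^(2-q) * E2 := by
      have := Real.rpow_le_rpow_of_nonpos hq4 hPl (by linarith : q - 2 ≤ 0)
      rwa [hinv, neg_sub] at this
    have hA := habsA u hu
    have hp1nn : 0 ≤ P u ^ (q-1) := Real.rpow_nonneg hPu.le _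
    have hp2nn : 0 ≤ P u ^ (q-2) := Real.rpow_nonneg hPu.le _
    calc |g2 u| ≤ |2*s^2*q * P u ^ (q-1)| +
        |(2*t + 2*s^2*u) * q * ((2*t + 2*s^2*u) * (q-1) * P u ^ (q-2))| := abs_add_le _ _
      _ = 2*s^2*|q| * (P u ^ (q-1)) +
          |2*t + 2*s^2*u| * |q| * (|2*t + 2*s^2*u| * |q-1| * (P u ^ (q-2))) := by
          simp only [abs_mul, abs_of_nonneg hp1nn, abs_of_nonneg hp2nn, abs_pow, sq_abs, abs_two]
      _ ≤ 2*s^2*|q| * ((4:ℝ)^(1-q) * E1) +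
          (3*(s*d)) * |q| * ((3*(s*d)) * |q-1| * ((4:ℝ)^(2-q) * E2)) := by
          gcongr
      _ = K * (s^2 * E1) := by
          rw [hKdef, ← hE]
          ring
  have hKE1nn : 0 ≤ K * (s^2 * E1) := by
    have h4a : (0:ℝ) < (4:ℝ)^(1-q) := Real.rpow_pos_of_pos (by norm_num) _
    have h4b : (0:ℝ) < (4:ℝ)^(2-q) := Real.rpow_pos_of_pos (by norm_num) _
    have : 0 ≤ K := by positivity
    positivity
  -- first MVT: bound g1 u - g1 0
  have mvt1 : ∀ u ∈ Icc (0:ℝ) 1, |g1 u - g1 0| ≤ K * (s^2 * E1) := by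
    intro u hu
    have h := Convex.norm_image_sub_le_of_norm_hasDerivWithin_le
      (f := g1) (f' := g2) (s := Icc (0:ℝ) 1) (C := K * (s^2 * E1))
      (fun v hv => (hg1' v hv).hasDerivWithinAt)
      (fun v hv => by rw [Real.norm_eq_abs]; exact hg2bound v hv)
      (convex_Icc 0 1) (left_mem_Icc.mpr (by norm_num)) hu
    rw [Real.norm_eq_abs, Real.norm_eq_abs, sub_zero] at h
    refine h.trans ?_
    have hu1 : |u| ≤ 1 := by rw [abs_le]; exact ⟨by linarith [hu.1], hu.2⟩
    nlinarith
  -- second MVT on h u = P u ^ q - g1 0 * u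
  have mvt2 : |(P 1 ^ q - g1 0 * 1) - (P 0 ^ q - g1 0 * 0)| ≤ K * (s^2 * E1) * |1 - 0| := by
    have hder : ∀ u ∈ Icc (0:ℝ) 1,
        HasDerivWithinAt (fun u => P u ^ q - g1 0 * u) (g1 u - g1 0) (Icc 0 1) u := by
      intro u hu
      have h := (hg u hu).sub ((hasDerivAt_id u).const_mul (g1 0))
      have h2 : g1 u - g1 0 * 1 = g1 u - g1 0 := by ring
      rw [← h2]
      exact h.hasDerivWithinAt
    have h := Convex.norm_image_sub_le_of_norm_hasDerivWithin_le
      (C := K * (s^2 * E1)) hder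
      (fun v hv => by rw [Real.norm_eq_abs]; exact mvt1 v hv)
      (convex_Icc 0 1) (left_mem_Icc.mpr (by norm_num)) (right_mem_Icc.mpr (by norm_num))
    rw [Real.norm_eq_abs, Real.norm_eq_abs] at h
    exact h
  have hP0 : P 0 = d^2 := by simp [hPdef]
  have hP1 : P 1 = d^2 + 2*t + s^2 := by simp [hPdef]
  have hg10 : g1 0 = 2*t*q*E1 := by simp [hg1def, hP0, hE1def]
  rw [hP0, hP1, hg10] at mvt2
  have hgoal : (d^2) ^ q - (d^2 + 2*t + s^2) ^ q + q * (2*t) * E1 =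
      -(((d^2 + 2*t + s^2) ^ q - 2*t*q*E1 * 1) - ((d^2) ^ q - 2*t*q*E1 * 0)) := by ring
  rw [hgoal, abs_neg]
  refine mvt2.trans ?_
  norm_num


open MeasureTheory Metric Set
open scoped RealInnerProductSpace

set_option maxHeartbeats 1000000 in
/-- For n ≥ 2 there is C = C(n) > 0 so that for every r > 0 and all x, y, z ∈ ℝ^n
with |x−y| ≤ r, x ≠ z, y ≠ z:
| |x−z|^{-(n-1)} 𝟙_{|z−x|≥r} − |y−z|^{-(n-1)} 𝟙_{|z−y|≥r}
  − (n−1)(y−x)·(x−z)|x−z|^{-(n+1)} 𝟙_{|z−x|≥r} | ≤ C r² / (|x−z|^{n+1} + r^{n+1}). -/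
theorem stmt_10 (n : ℕ) (hn : 2 ≤ n) :
    ∃ C > 0, ∀ r : ℝ, 0 < r → ∀ x y z : EuclideanSpace ℝ (Fin n),
      dist x y ≤ r → x ≠ z → y ≠ z →
      |(if r ≤ dist z x then dist x z ^ (-((n : ℝ) - 1)) else 0) -
        (if r ≤ dist z y then dist y z ^ (-((n : ℝ) - 1)) else 0) -
        ((n : ℝ) - 1) *
          (if r ≤ dist z x then ⟪y - x, x - z⟫ * dist x z ^ (-((n : ℝ) + 1)) else 0)|
        ≤ C * r ^ 2 / (dist x z ^ ((n : ℝ) + 1) + r ^ ((n : ℝ) + 1)) := by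
  have hn2 : (2:ℝ) ≤ (n:ℝ) := by exact_mod_cast hn
  set q : ℝ := -((n:ℝ) - 1) / 2 with hqdef
  have hq : q < 0 := by rw [hqdef]; linarith
  set K0 : ℝ := 2 * |q| * (4:ℝ)^(1-q) + 9 * |q| * |q-1| * (4:ℝ)^(2-q) with hK0def
  have hK0 : 0 ≤ K0 := by positivity
  set A : ℝ := ((n:ℝ)+1) * ((2:ℝ)^((n:ℝ)+1) + 1) with hAdef
  have hA : 0 < A := by positivity
  refine ⟨A + 2*K0 + 2, by positivity, ?_⟩
  intro r hr x y z hxy hxz hyz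
  set C : ℝ := A + 2*K0 + 2 with hCdef
  set d : ℝ := dist x z with hddef
  set e : ℝ := dist y z with hedef
  set s : ℝ := dist x y with hsdef
  set t : ℝ := (⟪y - x, x - z⟫ : ℝ) with htdef
  have hd : 0 < d := dist_pos.mpr hxz
  have he : 0 < e := dist_pos.mpr hyz
  have hs : 0 ≤ s := dist_nonneg
  have hzx : dist z x = d := dist_comm z x
  have hzy : dist z y = e := dist_comm z y
  set D : ℝ := d ^ ((n:ℝ)+1) + r ^ ((n:ℝ)+1) with hDdef
  have hD : 0 < D := by positivity
  have hexp1 : -((n:ℝ) - 1) ≤ 0 := by linarith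
  have hexpn : -(n:ℝ) ≤ 0 := by linarith
  rw [hzx, hzy]
  rcases le_total d (2*r) with hcase | hcase
  · -- crude case: d ≤ 2r
    set T1 : ℝ := if r ≤ d then d ^ (-((n : ℝ) - 1)) else 0 with hT1
    set T2 : ℝ := if r ≤ e then e ^ (-((n : ℝ) - 1)) else 0 with hT2
    set T3 : ℝ := ((n : ℝ) - 1) * (if r ≤ d then t * d ^ (-((n : ℝ) + 1)) else 0) with hT3
    set R1 : ℝ := r ^ (-((n:ℝ) - 1)) with hR1
    have hR1pos : 0 < R1 := Real.rpow_pos_of_pos hr _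
    have hb1 : |T1| ≤ R1 := by
      rw [hT1]
      split_ifs with h
      · rw [abs_of_nonneg (Real.rpow_nonneg hd.le _)]
        exact Real.rpow_le_rpow_of_nonpos hr h hexp1
      · simpa using hR1pos.le
    have hb2 : |T2| ≤ R1 := by
      rw [hT2]
      split_ifs with h
      · rw [abs_of_nonneg (Real.rpow_nonneg he.le _)]
        exact Real.rpow_le_rpow_of_nonpos hr h hexp1
      · simpa using hR1pos.le
    have hb3 : |T3| ≤ ((n:ℝ) - 1) * R1 := by
      rw [hT3]
      split_ifs with h
      · rw [abs_mul, abs_of_nonneg (by linarith : (0:ℝ) ≤ (n:ℝ) - 1), abs_mul,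
          abs_of_nonneg (Real.rpow_nonneg hd.le _)]
        have ht : |t| ≤ s * d := by
          rw [htdef, hsdef, hddef, dist_eq_norm, dist_eq_norm]
          calc |⟪y - x, x - z⟫| ≤ ‖y - x‖ * ‖x - z‖ := abs_real_inner_le_norm _ _
            _ = ‖x - y‖ * ‖x - z‖ := by rw [norm_sub_rev]
        have hdd : d * d ^ (-((n:ℝ)+1)) = d ^ (-(n:ℝ)) := by
          nth_rewrite 1 [← Real.rpow_one d]
          rw [← Real.rpow_add hd]
          norm_num
        have hrr : r * r ^ (-(n:ℝ)) = R1 := by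
          rw [hR1]
          nth_rewrite 1 [← Real.rpow_one r]
          rw [← Real.rpow_add hr]
          congr 1
          ring
        have hdn : d ^ (-(n:ℝ)) ≤ r ^ (-(n:ℝ)) := Real.rpow_le_rpow_of_nonpos hr h hexpn
        refine mul_le_mul_of_nonneg_left ?_ (by linarith : (0:ℝ) ≤ (n:ℝ) - 1)
        calc |t| * d ^ (-((n:ℝ)+1)) ≤ (s * d) * d ^ (-((n:ℝ)+1)) := by
              exact mul_le_mul_of_nonneg_right ht (Real.rpow_nonneg hd.le _)
          _ = s * d ^ (-(n:ℝ)) := by rw [mul_assoc, hdd]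
          _ ≤ r * r ^ (-(n:ℝ)) := by
              apply mul_le_mul hxy hdn (Real.rpow_nonneg hd.le _) hr.le
          _ = R1 := hrr
      · simp only [mul_zero, abs_zero]
        exact mul_nonneg (by linarith) hR1pos.le
    have htri : |T1 - T2 - T3| ≤ |T1| + |T2| + |T3| := by
      have h := (abs_add_le (T1 + -T2) (-T3)).trans (add_le_add_left (abs_add_le T1 (-T2)) _)
      simpa [sub_eq_add_neg, abs_neg] using h
    have hsum : |T1 - T2 - T3| ≤ ((n:ℝ) + 1) * R1 := by
      calc |T1 - T2 - T3| ≤ |T1| + |T2| + |T3| := htri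
        _ ≤ R1 + R1 + ((n:ℝ) - 1) * R1 := by gcongr
        _ = ((n:ℝ) + 1) * R1 := by ring
    refine hsum.trans ?_
    rw [le_div_iff₀ hD]
    -- (n+1) R1 * D ≤ C r^2
    have hDle : D ≤ ((2:ℝ)^((n:ℝ)+1) + 1) * r ^ ((n:ℝ)+1) := by
      rw [hDdef]
      have h1 : d ^ ((n:ℝ)+1) ≤ (2*r) ^ ((n:ℝ)+1) :=
        Real.rpow_le_rpow hd.le hcase (by linarith)
      have h2 : ((2:ℝ)*r) ^ ((n:ℝ)+1) = (2:ℝ)^((n:ℝ)+1) * r ^ ((n:ℝ)+1) :=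
        Real.mul_rpow (by norm_num) hr.le
      rw [h2] at h1
      linarith
    have hR1r : R1 * r ^ ((n:ℝ)+1) = r ^ 2 := by
      rw [hR1, ← Real.rpow_add hr]
      have : -((n:ℝ)-1) + ((n:ℝ)+1) = 2 := by ring
      rw [this, ← Real.rpow_natCast r 2]
      norm_num
    calc ((n:ℝ) + 1) * R1 * D ≤ ((n:ℝ) + 1) * R1 * (((2:ℝ)^((n:ℝ)+1) + 1) * r ^ ((n:ℝ)+1)) := by
          have : 0 ≤ ((n:ℝ) + 1) * R1 := by positivity
          exact mul_le_mul_of_nonneg_left hDle this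
      _ = A * (R1 * r ^ ((n:ℝ)+1)) := by rw [hAdef]; ring
      _ = A * r ^ 2 := by rw [hR1r]
      _ ≤ C * r ^ 2 := by
          rw [hCdef]
          have : 0 ≤ r ^ 2 := sq_nonneg r
          nlinarith
  · -- Taylor case: 2r ≤ d
    have hrd : r ≤ d := by linarith
    have hde : |d - e| ≤ s := abs_dist_sub_le x y z
    have hre : r ≤ e := by
      have := (abs_le.mp hde).2
      linarith [hxy]
    rw [if_pos hrd, if_pos hre, if_pos hrd]
    have hsd : s ≤ d / 2 := by linarith [hxy]
    have ht : |t| ≤ s * d := by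
      rw [htdef, hsdef, hddef, dist_eq_norm, dist_eq_norm]
      calc |⟪y - x, x - z⟫| ≤ ‖y - x‖ * ‖x - z‖ := abs_real_inner_le_norm _ _
        _ = ‖x - y‖ * ‖x - z‖ := by rw [norm_sub_rev]
    have hkey := key_taylor q d s t hq hd hs hsd ht
    -- identify e^2
    have hesq : d^2 + 2*t + s^2 = e^2 := by
      rw [htdef, hsdef, hddef, hedef, dist_eq_norm, dist_eq_norm, dist_eq_norm]
      have h := norm_add_sq_real (y - x) (x - z)
      rw [sub_add_sub_cancel] at h
      rw [h, norm_sub_rev x y]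
      ring
    rw [hesq] at hkey
    -- rpow conversions
    have hdsq : ∀ a : ℝ, ((d^2 : ℝ)) ^ a = d ^ (2*a) := by
      intro a
      rw [← Real.rpow_natCast d 2, ← Real.rpow_mul hd.le]
      norm_num
    have hesq' : ∀ a : ℝ, ((e^2 : ℝ)) ^ a = e ^ (2*a) := by
      intro a
      rw [← Real.rpow_natCast e 2, ← Real.rpow_mul he.le]
      norm_num
    have h2q : 2*q = -((n:ℝ) - 1) := by rw [hqdef]; ring
    have h2q1 : 2*(q-1) = -((n:ℝ) + 1) := by rw [hqdef]; ring
    have hgoalexpr : d ^ (-((n : ℝ) - 1)) - e ^ (-((n : ℝ) - 1)) -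
        ((n : ℝ) - 1) * (t * d ^ (-((n : ℝ) + 1))) =
        (d^2) ^ q - (e^2) ^ q + q * (2*t) * (d^2) ^ (q-1) := by
      rw [hdsq, hdsq, hesq', h2q, h2q1]
      have hnq : (n:ℝ) - 1 = -(2*q) := by rw [hqdef]; ring
      rw [hnq, h2q]
      ring
    rw [hgoalexpr]
    refine hkey.trans ?_
    -- RHS estimate
    rw [hdsq, h2q1]
    have hs2 : s^2 ≤ r^2 := pow_le_pow_left₀ hs hxy 2
    have hdneg : (0:ℝ) ≤ d ^ (-((n:ℝ)+1)) := Real.rpow_nonneg hd.le _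
    have step1 : K0 * (s^2 * d ^ (-((n:ℝ)+1))) ≤ K0 * (r^2 * d ^ (-((n:ℝ)+1))) := by
      apply mul_le_mul_of_nonneg_left _ hK0
      exact mul_le_mul_of_nonneg_right hs2 hdneg
    refine step1.trans ?_
    rw [le_div_iff₀ hD]
    have hmul : d ^ (-((n:ℝ)+1)) * d ^ ((n:ℝ)+1) = 1 := by
      rw [← Real.rpow_add hd, show -((n:ℝ)+1) + ((n:ℝ)+1) = 0 by ring, Real.rpow_zero]
    have hrpow : r ^ ((n:ℝ)+1) ≤ d ^ ((n:ℝ)+1) := Real.rpow_le_rpow hr.le hrd (by linarith)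
    have hx1 : d ^ (-((n:ℝ)+1)) * r ^ ((n:ℝ)+1) ≤ 1 := by
      calc d ^ (-((n:ℝ)+1)) * r ^ ((n:ℝ)+1) ≤ d ^ (-((n:ℝ)+1)) * d ^ ((n:ℝ)+1) :=
            mul_le_mul_of_nonneg_left hrpow hdneg
        _ = 1 := hmul
    have hr2 : (0:ℝ) ≤ r^2 := sq_nonneg r
    calc K0 * (r^2 * d ^ (-((n:ℝ)+1))) * D
        = K0 * r^2 * (d ^ (-((n:ℝ)+1)) * d ^ ((n:ℝ)+1)) +
          K0 * r^2 * (d ^ (-((n:ℝ)+1)) * r ^ ((n:ℝ)+1)) := by rw [hDdef]; ring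
      _ ≤ K0 * r^2 * 1 + K0 * r^2 * 1 := by
          rw [hmul]
          exact add_le_add_right (mul_le_mul_of_nonneg_left hx1 (mul_nonneg hK0 hr2)) _
      _ ≤ C * r ^ 2 := by
          rw [hCdef]
          nlinarith [mul_nonneg hA.le hr2, hr2, mul_nonneg hK0 hr2]
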